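/- Let p, m ≥ 1 be integers and let Q ∈ ℝ^{p×m} be a matrix with rank Q = p. Then there exist a matrix Q⁰ ∈ ℝ^{p×m} in canonical form and a lower unitriangular matrix L ∈ ℝ^{m×m} such that QL = Q⁰. -/
import Mathlib


/-- A matrix `L` is lower unitriangular if `L i j = 0` whenever `i < j`
and `L i i = 1` for every `i`. -/
def IsLowerUnitriangular {m : ℕ} (L : Matrix (Fin m) (Fin m) ℝ) : Prop :=
  (∀ i j : Fin m, i < j → L i j = 0) ∧ ∀ i : Fin m, L i i = 1

/-- `Q` is in canonical form with witnessing (distinct) column indices `c 1, …, c p`: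
for every row `i`, the entry `Q i (c i)` is nonzero, the entries `Q i j` vanish
for `j > c i` with `j ∉ {c (i+1), …, c p}`, and the entries `Q i j` vanish
for `j < c i`. -/
def IsCanonicalFormWith {p m : ℕ} (Q : Matrix (Fin p) (Fin m) ℝ) (c : Fin p → Fin m) : Prop :=
  Function.Injective c ∧
    ∀ i : Fin p,
      Q i (c i) ≠ 0 ∧
      (∀ j : Fin m, c i < j → (∀ k : Fin p, i < k → j ≠ c k) → Q i j = 0) ∧
      (∀ j : Fin m, j < c i → Q i j = 0)

/-- `Q` is in canonical form. -/
def IsCanonicalForm {p m : ℕ} (Q : Matrix (Fin p) (Fin m) ℝ) : Prop :=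
  ∃ c : Fin p → Fin m, IsCanonicalFormWith Q c

open scoped Matrix

private lemma lut_one {m : ℕ} : IsLowerUnitriangular (1 : Matrix (Fin m) (Fin m) ℝ) :=
  ⟨fun _ _ hij => Matrix.one_apply_ne (ne_of_lt hij), fun i => Matrix.one_apply_eq i⟩

private lemma lut_mul {m : ℕ} {A B : Matrix (Fin m) (Fin m) ℝ}
    (hA : IsLowerUnitriangular A) (hB : IsLowerUnitriangular B) :
    IsLowerUnitriangular (A * B) := by
  constructor
  · intro i j hij
    rw [Matrix.mul_apply]
    apply Finset.sum_eq_zero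
    intro k _
    rcases lt_or_ge k j with h | h
    · rw [hB.1 k j h, mul_zero]
    · rw [hA.1 i k (lt_of_lt_of_le hij h), zero_mul]
  · intro i
    rw [Matrix.mul_apply, Finset.sum_eq_single i]
    · rw [hA.2, hB.2, one_mul]
    · intro k _ hk
      rcases lt_or_gt_of_ne hk with h | h
      · rw [hB.1 k i h, mul_zero]
      · rw [hA.1 i k h, zero_mul]
    · intro h; exact absurd (Finset.mem_univ i) h

private lemma lut_det {m : ℕ} {L : Matrix (Fin m) (Fin m) ℝ}
    (h : IsLowerUnitriangular L) : L.det = 1 := by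
  rw [Matrix.det_of_lowerTriangular L (fun i j hij => h.1 i j hij)]
  simp [h.2]

private lemma canonical_support {p m : ℕ} {Q : Matrix (Fin p) (Fin m) ℝ} {c : Fin p → Fin m}
    (h : IsCanonicalFormWith Q c) (k : Fin p) (j : Fin m) (hj : ∀ l : Fin p, j ≠ c l) :
    Q k j = 0 := by
  rcases lt_trichotomy j (c k) with h1 | h1 | h1
  · exact (h.2 k).2.2 j h1
  · exact absurd h1 (hj k)
  · exact (h.2 k).2.1 j h1 (fun l _ => hj l)

private lemma key {m : ℕ} : ∀ (p : ℕ) (Q : Matrix (Fin p) (Fin m) ℝ),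
    LinearIndependent ℝ (fun i => Q i) →
    ∃ (c : Fin p → Fin m) (L : Matrix (Fin m) (Fin m) ℝ),
      IsLowerUnitriangular L ∧ IsCanonicalFormWith (Q * L) c := by
  intro p
  induction p with
  | zero =>
    intro Q _
    exact ⟨Fin.elim0, 1, lut_one, fun {a} => a.elim0, fun i => i.elim0⟩
  | succ p ih =>
    intro Q hQ
    classical
    set Q' : Matrix (Fin p) (Fin m) ℝ := Matrix.of (fun k => Q k.succ) with hQ'def
    have hQ'li : LinearIndependent ℝ (fun k => Q' k) :=
      hQ.comp Fin.succ (Fin.succ_injective p)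
    obtain ⟨c', L1, hL1, hcan⟩ := ih Q' hQ'li
    set Q0' : Matrix (Fin p) (Fin m) ℝ := Q' * L1 with hQ0'def
    set Q1 : Matrix (Fin (p + 1)) (Fin m) ℝ := Q * L1 with hQ1def
    have hrowsucc : ∀ (k : Fin p) (j : Fin m), Q1 k.succ j = Q0' k j := by
      intro k j
      simp [hQ1def, hQ0'def, Matrix.mul_apply, hQ'def]
    have hsupp : ∀ (k : Fin p) (j : Fin m), (∀ l, j ≠ c' l) → Q0' k j = 0 :=
      fun k j hj => canonical_support hcan k j hj
    -- rows of Q1 are linearly independent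
    have hL1unit : IsUnit L1 := by
      rw [Matrix.isUnit_iff_isUnit_det, lut_det hL1]; exact isUnit_one
    have hinj : Function.Injective L1.vecMul :=
      Matrix.vecMul_injective_iff_isUnit.mpr hL1unit
    have hQ1li : LinearIndependent ℝ (fun i => Q1 i) := by
      have h2 := hQ.map' L1.vecMulLinear (LinearMap.ker_eq_bot.mpr hinj)
      have heq : (fun i => Q1 i) = (L1.vecMulLinear ∘ fun i => Q i) := by
        funext i
        ext j
        simp [hQ1def, Matrix.mul_apply, Matrix.vecMul, dotProduct]
      rw [heq]
      exact h2
    -- there is a nonzero entry of row 0 outside the pivot columns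
    set S : Finset (Fin m) := Finset.univ.filter (fun j => Q1 0 j ≠ 0 ∧ ∀ l, j ≠ c' l) with hSdef
    have hSne : S.Nonempty := by
      by_contra hSe
      rw [Finset.not_nonempty_iff_eq_empty] at hSe
      have hzero : ∀ j, (∀ l, j ≠ c' l) → Q1 0 j = 0 := by
        intro j hj
        by_contra hne
        have hjS : j ∈ S := by
          rw [hSdef, Finset.mem_filter]
          exact ⟨Finset.mem_univ j, hne, hj⟩
        rw [hSe] at hjS
        exact absurd hjS (Finset.notMem_empty j)
      have hcons : (fun i => Q1 i) = Fin.cons (Q1 0) (fun k => Q1 k.succ) := by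
        funext i
        refine Fin.cases ?_ ?_ i <;> simp
      rw [hcons, linearIndependent_fin_cons] at hQ1li
      apply hQ1li.2
      set R : Matrix (Fin p) (Fin p) ℝ := Matrix.of (fun k l => Q0' k (c' l)) with hRdef
      have hRtri : ∀ (k l : Fin p), l < k → R k l = 0 := by
        intro k l hlk
        rcases lt_trichotomy (c' l) (c' k) with h | h | h
        · exact (hcan.2 k).2.2 _ h
        · exact absurd (hcan.1 h) (ne_of_lt hlk)
        · refine (hcan.2 k).2.1 _ h ?_
          intro k' hkk' he
          exact (ne_of_lt (lt_trans hlk hkk')) (hcan.1 he)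
      have hRdet : R.det ≠ 0 := by
        have htri : R.BlockTriangular id := fun i j hij => hRtri i j hij
        rw [Matrix.det_of_upperTriangular htri]
        exact Finset.prod_ne_zero_iff.mpr (fun k _ => (hcan.2 k).1)
      set lam : Fin p → ℝ := (fun l => Q1 0 (c' l)) ᵥ* R⁻¹ with hlamdef
      have hlamR : lam ᵥ* R = fun l => Q1 0 (c' l) := by
        rw [hlamdef, Matrix.vecMul_vecMul, Matrix.nonsing_inv_mul R (Ne.isUnit hRdet),
          Matrix.vecMul_one]
      have hrow0eq : Q1 0 = lam ᵥ* Q0' := by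
        funext j
        by_cases hjp : ∃ l, j = c' l
        · obtain ⟨l, rfl⟩ := hjp
          have h3 := congrFun hlamR l
          simp only [Matrix.vecMul, dotProduct, hRdef, Matrix.of_apply] at h3 ⊢
          exact h3.symm
        · push_neg at hjp
          rw [hzero j hjp]
          simp only [Matrix.vecMul, dotProduct]
          refine (Finset.sum_eq_zero ?_).symm
          intro k _
          rw [hsupp k j hjp, mul_zero]
      rw [hrow0eq]
      have hv : lam ᵥ* Q0' = ∑ k : Fin p, lam k • (fun j => Q1 k.succ j) := by
        funext j
        simp only [Matrix.vecMul, dotProduct, Finset.sum_apply, Pi.smul_apply,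
          smul_eq_mul]
        exact Finset.sum_congr rfl (fun k _ => by rw [hrowsucc k j])
      rw [hv]
      refine Submodule.sum_mem _ (fun k _ => Submodule.smul_mem _ _ ?_)
      exact Submodule.subset_span ⟨k, rfl⟩
    set c0 : Fin m := S.max' hSne with hc0def
    have hc0S : c0 ∈ S := S.max'_mem hSne
    rw [hSdef, Finset.mem_filter] at hc0S
    obtain ⟨-, hc0ne, hc0np⟩ := hc0S
    have hmax : ∀ j ∈ S, j ≤ c0 := fun j hj => S.le_max' j hj
    -- the elimination matrix
    set E : Matrix (Fin m) (Fin m) ℝ :=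
      Matrix.of (fun a b => if a = c0 ∧ b < c0 then -(Q1 0 b) / Q1 0 c0 else 0) with hEdef
    set L2 : Matrix (Fin m) (Fin m) ℝ := 1 + E with hL2def
    have hL2lut : IsLowerUnitriangular L2 := by
      constructor
      · intro i j hij
        simp only [hL2def, Matrix.add_apply, Matrix.one_apply, hEdef, Matrix.of_apply]
        rw [if_neg (ne_of_lt hij), if_neg, add_zero]
        rintro ⟨rfl, hj⟩
        exact absurd hij (not_lt.mpr hj.le)
      · intro i
        simp only [hL2def, Matrix.add_apply, Matrix.one_apply_eq, hEdef, Matrix.of_apply]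
        rw [if_neg, add_zero]
        rintro ⟨rfl, hi⟩
        exact lt_irrefl _ hi
    set Q2 : Matrix (Fin (p + 1)) (Fin m) ℝ := Q1 * L2 with hQ2def
    have hQ2app : ∀ i j, Q2 i j =
        Q1 i j + (if j < c0 then Q1 i c0 * (-(Q1 0 j) / Q1 0 c0) else 0) := by
      intro i j
      rw [hQ2def, hL2def, Matrix.mul_add, Matrix.mul_one, Matrix.add_apply]
      congr 1
      rw [Matrix.mul_apply, Finset.sum_eq_single c0]
      · simp only [hEdef, Matrix.of_apply, true_and, if_pos rfl]
        split_ifs with h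
        · simp [h]
        · simp [h]
      · intro b _ hb
        simp only [hEdef, Matrix.of_apply]
        rw [if_neg (fun hh => hb hh.1), mul_zero]
      · intro h; exact absurd (Finset.mem_univ c0) h
    have hQ2succ : ∀ (k : Fin p) (j : Fin m), Q2 k.succ j = Q0' k j := by
      intro k j
      rw [hQ2app]
      have h0 : Q1 k.succ c0 = 0 := by
        rw [hrowsucc k]
        exact hsupp k c0 hc0np
      rw [h0, hrowsucc k]
      split_ifs <;> simp
    have hQmul : Q * (L1 * L2) = Q2 := by rw [← Matrix.mul_assoc, ← hQ1def, ← hQ2def]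
    refine ⟨Fin.cons c0 c', L1 * L2, lut_mul hL1 hL2lut, ?_⟩
    rw [hQmul]
    constructor
    · -- injectivity
      intro a b hab
      induction a using Fin.cases with
      | zero =>
        induction b using Fin.cases with
        | zero => rfl
        | succ l =>
          rw [Fin.cons_zero, Fin.cons_succ] at hab
          exact absurd hab (hc0np l)
      | succ k =>
        induction b using Fin.cases with
        | zero =>
          rw [Fin.cons_zero, Fin.cons_succ] at hab
          exact absurd hab.symm (hc0np k)
        | succ l =>
          rw [Fin.cons_succ, Fin.cons_succ] at hab
          rw [hcan.1 hab]
    · intro i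
      induction i using Fin.cases with
      | zero =>
        rw [Fin.cons_zero]
        refine ⟨?_, ?_, ?_⟩
        · rw [hQ2app, if_neg (lt_irrefl c0), add_zero]
          exact hc0ne
        · intro j hj hnp
          have hnp' : ∀ l, j ≠ c' l := by
            intro l
            have := hnp l.succ (Fin.succ_pos l)
            rwa [Fin.cons_succ] at this
          rw [hQ2app, if_neg (not_lt.mpr hj.le), add_zero]
          by_contra hne
          have hjS : j ∈ S := by
            rw [hSdef, Finset.mem_filter]
            exact ⟨Finset.mem_univ j, hne, hnp'⟩
          exact absurd (hmax j hjS) (not_le.mpr hj)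
        · intro j hj
          rw [hQ2app, if_pos hj, mul_comm, div_mul_cancel₀ _ hc0ne, add_neg_cancel]
      | succ k =>
        rw [Fin.cons_succ]
        refine ⟨?_, ?_, ?_⟩
        · rw [hQ2succ]
          exact (hcan.2 k).1
        · intro j hj hnp
          rw [hQ2succ]
          refine (hcan.2 k).2.1 j hj ?_
          intro l hl
          have := hnp l.succ (by rwa [Fin.succ_lt_succ_iff])
          rwa [Fin.cons_succ] at this
        · intro j hj
          rw [hQ2succ]
          exact (hcan.2 k).2.2 j hj

/-- Existence part of the canonical UL-decomposition: every full row rank matrix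
`Q ∈ ℝ^{p×m}` can be written as `Q * L = Q⁰` with `L` lower unitriangular and
`Q⁰` in canonical form. -/
theorem canonical_UL_decomposition_exists {p m : ℕ} (hp : 1 ≤ p) (hm : 1 ≤ m)
    (Q : Matrix (Fin p) (Fin m) ℝ) (hQ : Q.rank = p) :
    ∃ (Q0 : Matrix (Fin p) (Fin m) ℝ) (L : Matrix (Fin m) (Fin m) ℝ),
      IsCanonicalForm Q0 ∧ IsLowerUnitriangular L ∧ Q * L = Q0 := by
  have hli : LinearIndependent ℝ (fun i => Q i) := by
    rw [linearIndependent_iff_card_eq_finrank_span]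
    rw [Fintype.card_fin]
    have h2 : Set.finrank ℝ (Set.range fun i => Q i) = Q.rank := by
      rw [Q.rank_eq_finrank_span_row]
      rfl
    rw [h2, hQ]
  obtain ⟨c, L, hL, hcan⟩ := key p Q hli
  exact ⟨Q * L, L, ⟨c, hcan⟩, hL, rfl⟩
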